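/- For every ε > 0, the function h(u) = erfc(√(u² + ε)) / erfc(u) is strictly increasing on the whole real line. (Note erfc(u) > 0 for every real u, so h is well defined.) -/

import Mathlib

open Real

/-- The Gauss error function `erf x = (2/√π) ∫₀ˣ e^{−t²} dt`. -/
noncomputable def erf (x : ℝ) : ℝ := 2 / Real.sqrt Real.pi * ∫ t in (0:ℝ)..x, Real.exp (-t ^ 2)

/-- The complementary error function `erfc x = 1 - erf x`. -/
noncomputable def erfc (x : ℝ) : ℝ := 1 - erf x

open MeasureTheory Set Filter Topology intervalIntegral

lemma contG : Continuous fun t : ℝ => Real.exp (-t ^ 2) := by continuity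

lemma intG : Integrable fun t : ℝ => Real.exp (-t ^ 2) := by
  have := integrable_exp_neg_mul_sq (b := 1) one_pos
  simpa using this

lemma erf_hasDerivAt (x : ℝ) : HasDerivAt erf (2 / Real.sqrt Real.pi * Real.exp (-x ^ 2)) x := by
  have h := intervalIntegral.integral_hasDerivAt_right (f := fun t : ℝ => Real.exp (-t ^ 2)) (a := 0) (b := x)
    (intG.intervalIntegrable) (contG.stronglyMeasurableAtFilter _ _) contG.continuousAt
  exact (h.const_mul (2 / Real.sqrt Real.pi))

lemma erfc_hasDerivAt (x : ℝ) :
    HasDerivAt erfc (-(2 / Real.sqrt Real.pi * Real.exp (-x ^ 2))) x := by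
  exact ((erf_hasDerivAt x).const_sub 1)

lemma tendsto_erf : Tendsto erf atTop (𝓝 1) := by
  have h : Tendsto (fun x : ℝ => ∫ t in (0:ℝ)..x, Real.exp (-t ^ 2)) atTop
      (𝓝 (∫ t in Ioi (0:ℝ), Real.exp (-t ^ 2))) :=
    intervalIntegral_tendsto_integral_Ioi 0 intG.integrableOn tendsto_id
  have hg : ∫ t in Ioi (0:ℝ), Real.exp (-t ^ 2) = Real.sqrt Real.pi / 2 := by
    have := integral_gaussian_Ioi 1
    simpa using this
  rw [hg] at h
  have := h.const_mul (2 / Real.sqrt Real.pi)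
  have hpi : Real.sqrt Real.pi ≠ 0 := by positivity
  have he : (1:ℝ) = 2 / Real.sqrt Real.pi * (Real.sqrt Real.pi / 2) := by field_simp
  rw [he]
  exact this

lemma tendsto_erfc : Tendsto erfc atTop (𝓝 0) := by
  have := tendsto_erf.const_sub 1
  rw [sub_self] at this
  exact this

lemma erfc_eq_integral (x : ℝ) :
    Real.sqrt Real.pi / 2 * erfc x = ∫ t in Ioi x, Real.exp (-t ^ 2) := by
  have hd : ∀ y ∈ Ici x, HasDerivAt (fun y => -(Real.sqrt Real.pi / 2 * erfc y))
      (Real.exp (-y ^ 2)) y := by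
    intro y _
    have h := ((erfc_hasDerivAt y).const_mul (Real.sqrt Real.pi / 2)).neg
    have hpi : Real.sqrt Real.pi ≠ 0 := by positivity
    convert h using 1
    · rfl
    · rfl
    · rfl
    field_simp
  have hint : IntegrableOn (fun t : ℝ => Real.exp (-t ^ 2)) (Ioi x) := intG.integrableOn
  have hlim : Tendsto (fun y => -(Real.sqrt Real.pi / 2 * erfc y)) atTop (𝓝 0) := by
    have := (tendsto_erfc.const_mul (Real.sqrt Real.pi / 2)).neg
    simpa using this
  have := MeasureTheory.integral_Ioi_of_hasDerivAt_of_tendsto' hd hint hlim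
  rw [this]; ring

lemma integral_Ioi_gauss_pos (x : ℝ) : 0 < ∫ t in Ioi x, Real.exp (-t ^ 2) := by
  refine (setIntegral_pos_iff_support_of_nonneg_ae ?_ ?_).2 ?_
  · filter_upwards with t using (Real.exp_pos _).le
  · exact intG.integrableOn
  · have : (Function.support fun t : ℝ => Real.exp (-t ^ 2)) = univ := by
      ext t; simp [Function.support, (Real.exp_pos (-t ^ 2)).ne']
    rw [this, univ_inter]
    simp [Real.volume_Ioi]

lemma erfc_pos (x : ℝ) : 0 < erfc x := by
  have h := integral_Ioi_gauss_pos x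
  rw [← erfc_eq_integral] at h
  have hpi : 0 < Real.sqrt Real.pi / 2 := by positivity
  nlinarith [h, hpi]

noncomputable def phi (x : ℝ) : ℝ := x * Real.exp (-x ^ 2) / (1 + 2 * x ^ 2)

lemma denom_pos (x : ℝ) : (0:ℝ) < 1 + 2 * x ^ 2 := by positivity

lemma phi_hasDerivAt (x : ℝ) :
    HasDerivAt phi (Real.exp (-x ^ 2) * (2 / (1 + 2 * x ^ 2) ^ 2 - 1)) x := by
  have hexp : HasDerivAt (fun x : ℝ => Real.exp (-x ^ 2)) (Real.exp (-x ^ 2) * (-(2 * x))) x := by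
    have h1 : HasDerivAt (fun x : ℝ => -x ^ 2) (-(2 * x)) x := by
      have := (hasDerivAt_pow 2 x).neg
      simp at this
      exact this
    exact h1.exp
  have hnum : HasDerivAt (fun x : ℝ => x * Real.exp (-x ^ 2))
      (1 * Real.exp (-x ^ 2) + x * (Real.exp (-x ^ 2) * (-(2 * x)))) x :=
    (hasDerivAt_id x).mul hexp
  have hden : HasDerivAt (fun x : ℝ => 1 + 2 * x ^ 2) (2 * (2 * x)) x := by
    simpa using ((hasDerivAt_pow 2 x).const_mul 2).const_add 1
  have h := hnum.div hden (denom_pos x).ne'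
  convert h using 1
  · rfl
  · rfl
  · rfl
  have hd := (denom_pos x).ne'
  field_simp
  ring

lemma phi_cont : Continuous phi :=
  (continuous_id.mul contG).div (by continuity) (fun x => (denom_pos x).ne')

lemma tendsto_phi : Tendsto phi atTop (𝓝 0) := by
  have hexp : Tendsto (fun x : ℝ => Real.exp (-x ^ 2)) atTop (𝓝 0) := by
    apply Real.tendsto_exp_atBot.comp
    have : Tendsto (fun x : ℝ => x ^ 2) atTop atTop := tendsto_pow_atTop two_ne_zero
    exact tendsto_neg_atBot_iff.mpr this
  apply squeeze_zero_norm _ hexp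
  intro x
  rw [Real.norm_eq_abs, phi, abs_div, abs_of_pos (denom_pos x), abs_mul,
    abs_of_pos (Real.exp_pos _), div_le_iff₀ (denom_pos x)]
  nlinarith [abs_nonneg x, sq_abs x, Real.exp_pos (-x ^ 2), abs_nonneg x,
    sq_nonneg (|x| - 1), Real.exp_pos (-x^2)]

lemma phi_deriv_integrable (x : ℝ) :
    IntegrableOn (fun t : ℝ => Real.exp (-t ^ 2) * (2 / (1 + 2 * t ^ 2) ^ 2 - 1)) (Ioi x) := by
  apply Integrable.integrableOn
  apply intG.mono
  · apply Continuous.aestronglyMeasurable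
    apply contG.mul
    apply Continuous.sub _ continuous_const
    exact continuous_const.div (by continuity) (fun t => by positivity)
  · filter_upwards with t
    simp only [Real.norm_eq_abs, abs_mul, abs_of_pos (Real.exp_pos _)]
    have h1 : (0:ℝ) < (1 + 2 * t ^ 2) ^ 2 := by positivity
    have h2 : (1:ℝ) ≤ (1 + 2 * t ^ 2) ^ 2 := by nlinarith
    have : |2 / (1 + 2 * t ^ 2) ^ 2 - 1| ≤ 1 := by
      rw [abs_le]
      constructor
      · have : (0:ℝ) < 2 / (1 + 2 * t ^ 2) ^ 2 := by positivity
        linarith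
      · have : 2 / (1 + 2 * t ^ 2) ^ 2 ≤ 2 := by
          rw [div_le_iff₀ h1]; nlinarith
        linarith
    nlinarith [Real.exp_pos (-t ^ 2)]

lemma key (x : ℝ) : phi x < ∫ t in Ioi x, Real.exp (-t ^ 2) := by
  have hftc : ∫ t in Ioi x, Real.exp (-t ^ 2) * (2 / (1 + 2 * t ^ 2) ^ 2 - 1) = 0 - phi x := by
    refine MeasureTheory.integral_Ioi_of_hasDerivAt_of_tendsto'
      (fun y _ => phi_hasDerivAt y) (phi_deriv_integrable x) tendsto_phi
  have hsplit : (∫ t in Ioi x, Real.exp (-t ^ 2)) - phi x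
      = ∫ t in Ioi x, Real.exp (-t ^ 2) * (2 / (1 + 2 * t ^ 2) ^ 2) := by
    rw [show (∫ t in Ioi x, Real.exp (-t ^ 2)) - phi x
        = (∫ t in Ioi x, Real.exp (-t ^ 2))
          + ∫ t in Ioi x, Real.exp (-t ^ 2) * (2 / (1 + 2 * t ^ 2) ^ 2 - 1) by
      rw [hftc]; ring]
    rw [← MeasureTheory.integral_add intG.integrableOn (phi_deriv_integrable x)]
    congr 1; ext t; ring
  have hpos : 0 < ∫ t in Ioi x, Real.exp (-t ^ 2) * (2 / (1 + 2 * t ^ 2) ^ 2) := by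
    refine (setIntegral_pos_iff_support_of_nonneg_ae ?_ ?_).2 ?_
    · filter_upwards with t
      positivity
    · have : IntegrableOn (fun t : ℝ => Real.exp (-t ^ 2)
          + Real.exp (-t ^ 2) * (2 / (1 + 2 * t ^ 2) ^ 2 - 1)) (Ioi x) :=
        intG.integrableOn.add (phi_deriv_integrable x)
      apply this.congr_fun _ measurableSet_Ioi
      intro t _; ring
    · have : (Function.support fun t : ℝ => Real.exp (-t ^ 2) * (2 / (1 + 2 * t ^ 2) ^ 2))
          = univ := by
        ext t
        have h1 : (0:ℝ) < Real.exp (-t ^ 2) * (2 / (1 + 2 * t ^ 2) ^ 2) := by positivity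
        simp [Function.support, h1.ne', (denom_pos t).ne']
      rw [this, univ_inter]
      simp [Real.volume_Ioi]
  linarith

noncomputable def g (x : ℝ) : ℝ := x * Real.exp (x ^ 2) * erfc x

lemma g_hasDerivAt (x : ℝ) :
    HasDerivAt g ((1 + 2 * x ^ 2) * Real.exp (x ^ 2) * erfc x - 2 / Real.sqrt Real.pi * x) x := by
  have hexp : HasDerivAt (fun x : ℝ => Real.exp (x ^ 2)) (Real.exp (x ^ 2) * (2 * x)) x := by
    have h1 : HasDerivAt (fun x : ℝ => x ^ 2) (2 * x) x := by simpa using hasDerivAt_pow 2 x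
    exact h1.exp
  have hnum : HasDerivAt (fun x : ℝ => x * Real.exp (x ^ 2))
      (1 * Real.exp (x ^ 2) + x * (Real.exp (x ^ 2) * (2 * x))) x :=
    (hasDerivAt_id x).mul hexp
  have h := hnum.mul (erfc_hasDerivAt x)
  convert h using 1
  · rfl
  · rfl
  · rfl
  have hcancel : Real.exp (x ^ 2) * Real.exp (-x ^ 2) = 1 := by
    rw [← Real.exp_add]; simp
  linear_combination (2 / Real.sqrt Real.pi * x) * hcancel

lemma erfc_continuous : Continuous erfc := by
  have : Differentiable ℝ erfc := fun x => (erfc_hasDerivAt x).differentiableAt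
  exact this.continuous

lemma g_strictMonoOn : StrictMonoOn g (Ici (0:ℝ)) := by
  apply strictMonoOn_of_deriv_pos (convex_Ici 0)
  · exact ((continuous_id.mul (Real.continuous_exp.comp (by continuity))).mul
      erfc_continuous).continuousOn
  · intro x hx
    rw [interior_Ici] at hx
    rw [(g_hasDerivAt x).deriv]
    have hxpos : 0 < x := hx
    have hkey := key x
    have herfc : erfc x = 2 / Real.sqrt Real.pi * ∫ t in Ioi x, Real.exp (-t ^ 2) := by
      have h := erfc_eq_integral x
      have hpi : Real.sqrt Real.pi ≠ 0 := by positivity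
      field_simp at h ⊢
      linarith
    have hpi : (0:ℝ) < Real.sqrt Real.pi := Real.sqrt_pos.2 Real.pi_pos
    have hlb : 2 / Real.sqrt Real.pi * phi x < erfc x := by
      rw [herfc]
      have : (0:ℝ) < 2 / Real.sqrt Real.pi := by positivity
      exact (mul_lt_mul_iff_right₀ this).2 hkey
    rw [phi] at hlb
    have hdpos := denom_pos x
    have hepos := Real.exp_pos (x ^ 2)
    have hcancel : Real.exp (x ^ 2) * Real.exp (-x ^ 2) = 1 := by
      rw [← Real.exp_add]; simp
    have h2 : 2 / Real.sqrt Real.pi * (x * Real.exp (-x ^ 2)) < (1 + 2 * x ^ 2) * erfc x := by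
      rw [← mul_div_assoc] at hlb
      have := (div_lt_iff₀ hdpos).1 hlb
      nlinarith [this]
    have h3 := (mul_lt_mul_iff_right₀ hepos).2 h2
    have h5 : Real.exp (x ^ 2) * (2 / Real.sqrt Real.pi * (x * Real.exp (-x ^ 2)))
        = 2 / Real.sqrt Real.pi * x := by
      linear_combination (2 / Real.sqrt Real.pi * x) * hcancel
    rw [h5] at h3
    linarith [h3]

/-- For every `ε > 0`, the function `h u = erfc (√(u² + ε)) / erfc u` is strictly
increasing on the whole real line. -/
theorem strictMono_erfc_ratio (ε : ℝ) (hε : 0 < ε) :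
    StrictMono (fun u : ℝ => erfc (Real.sqrt (u ^ 2 + ε)) / erfc u) := by
  set c : ℝ := 2 / Real.sqrt Real.pi with hc
  have hcpos : 0 < c := by rw [hc]; positivity
  apply strictMono_of_deriv_pos
  intro u
  set s : ℝ := Real.sqrt (u ^ 2 + ε) with hsdef
  have hargpos : 0 < u ^ 2 + ε := by positivity
  have hspos : 0 < s := Real.sqrt_pos.2 hargpos
  have hs2 : s ^ 2 = u ^ 2 + ε := Real.sq_sqrt hargpos.le
  -- derivative of the inner sqrt
  have hsq : HasDerivAt (fun u : ℝ => u ^ 2 + ε) (2 * u) u := by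
    simpa using (hasDerivAt_pow 2 u).add_const ε
  have hsqrt : HasDerivAt (fun u : ℝ => Real.sqrt (u ^ 2 + ε)) (u / s) u := by
    have h := (Real.hasDerivAt_sqrt hargpos.ne').comp u hsq
    convert h using 1
    · rfl
    · rfl
    · rfl
    rw [← hsdef]
    field_simp
  have hnum : HasDerivAt (fun u : ℝ => erfc (Real.sqrt (u ^ 2 + ε)))
      (-(c * Real.exp (-s ^ 2)) * (u / s)) u :=
    by have := (erfc_hasDerivAt s).comp u hsqrt; exact this
  have hden : HasDerivAt erfc (-(c * Real.exp (-u ^ 2))) u := erfc_hasDerivAt u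
  have hne : erfc u ≠ 0 := (erfc_pos u).ne'
  have hdiv : HasDerivAt (fun u : ℝ => erfc (Real.sqrt (u ^ 2 + ε)) / erfc u)
      ((-(c * Real.exp (-s ^ 2)) * (u / s) * erfc u
        - erfc s * -(c * Real.exp (-u ^ 2))) / erfc u ^ 2) u := by
    exact hnum.div hden hne
  rw [hdiv.deriv]
  apply div_pos _ (by positivity)
  have hNsimp : -(c * Real.exp (-s ^ 2)) * (u / s) * erfc u - erfc s * -(c * Real.exp (-u ^ 2))
      = c * Real.exp (-u ^ 2) * erfc s - c * Real.exp (-(u ^ 2 + ε)) * (u / s) * erfc u := by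
    rw [hs2]; ring
  rw [hNsimp]
  rcases le_or_gt u 0 with hu | hu
  · -- easy case : second term is nonpositive
    have h1 : u / s ≤ 0 := div_nonpos_of_nonpos_of_nonneg hu hspos.le
    have h2 : c * Real.exp (-(u ^ 2 + ε)) * (u / s) * erfc u ≤ 0 :=
      mul_nonpos_iff.2 (Or.inr ⟨mul_nonpos_iff.2 (Or.inl ⟨by positivity, h1⟩), (erfc_pos u).le⟩)
    have h3 : 0 < c * Real.exp (-u ^ 2) * erfc s := by
      have := erfc_pos s; positivity
    linarith
  · -- hard case : use strict monotonicity of g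
    have hus : u < s := by
      rw [hsdef]
      nth_rewrite 1 [← Real.sqrt_sq hu.le]
      exact Real.sqrt_lt_sqrt (sq_nonneg u) (by linarith)
    have hg : g u < g s := g_strictMonoOn hu.le (le_of_lt (hu.trans hus)) hus
    rw [g, g, hs2, Real.exp_add] at hg
    -- hg : u * exp (u²) * erfc u < s * (exp (u²) * exp ε) * erfc s
    have hA : 0 < Real.exp (u ^ 2) := Real.exp_pos _
    have hB : 0 < Real.exp ε := Real.exp_pos _
    have hkey : u * erfc u < s * Real.exp ε * erfc s := by
      nlinarith [hg, hA]
    have h2 : u * erfc u / (s * Real.exp ε) < erfc s :=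
      (div_lt_iff₀ (by positivity)).2 (by nlinarith [hkey])
    -- rewrite the goal
    have e1 : Real.exp (-(u ^ 2 + ε)) = Real.exp (-u ^ 2) * (Real.exp ε)⁻¹ := by
      rw [← Real.exp_neg, ← Real.exp_add]; ring_nf
    rw [e1, sub_pos]
    have e2 : c * (Real.exp (-u ^ 2) * (Real.exp ε)⁻¹) * (u / s) * erfc u
        = c * Real.exp (-u ^ 2) * (u * erfc u / (s * Real.exp ε)) := by
      field_simp
    rw [e2]
    have hpos : 0 < c * Real.exp (-u ^ 2) := by positivity
    exact (mul_lt_mul_iff_right₀ hpos).2 h2
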